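/- Let A and B be finite subsets of ℝ^d, each of cardinality at least 3, such that ‖a − b‖ = 1 for all a ∈ A and b ∈ B. Then there exist a point c ∈ ℝ^d and radii r_A, r_B ≥ 0 with r_A² + r_B² = 1 such that every point of A is at distance r_A from c and every point of B is at distance r_B from c. -/

import Mathlib

open scoped RealInnerProductSpace

/-- Lenz lemma (spheres part): two finite sets of size at least 3 at mutual unit
distance lie on concentric spheres whose squared radii sum to 1. -/
theorem stmt_3 {d : ℕ} (A B : Finset (EuclideanSpace ℝ (Fin d)))
    (hA : 3 ≤ A.card) (hB : 3 ≤ B.card)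
    (h : ∀ a ∈ A, ∀ b ∈ B, dist a b = 1) :
    ∃ (c : EuclideanSpace ℝ (Fin d)) (rA rB : ℝ), 0 ≤ rA ∧ 0 ≤ rB ∧
      rA ^ 2 + rB ^ 2 = 1 ∧ (∀ a ∈ A, dist a c = rA) ∧ (∀ b ∈ B, dist b c = rB) := by
  obtain ⟨a₀, ha₀⟩ := Finset.card_pos.mp (by omega : 0 < A.card)
  obtain ⟨b₀, hb₀⟩ := Finset.card_pos.mp (by omega : 0 < B.card)
  -- polarization: inner product of differences vanishes
  have e : ∀ x y : EuclideanSpace ℝ (Fin d), dist x y = 1 → ⟪x, y⟫ = (‖x‖ ^ 2 + ‖y‖ ^ 2 - 1) / 2 := by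
    intro x y hxy
    have h1 : ‖x - y‖ ^ 2 = 1 := by rw [← dist_eq_norm, hxy]; norm_num
    have h2 := norm_sub_sq_real x y
    linarith
  have key : ∀ a ∈ A, ∀ b ∈ B, ⟪b - b₀, a - a₀⟫ = 0 := by
    intro a ha b hb
    have h1 := e a b (h a ha b hb)
    have h2 := e a b₀ (h a ha b₀ hb₀)
    have h3 := e a₀ b (h a₀ ha₀ b hb)
    have h4 := e a₀ b₀ (h a₀ ha₀ b₀ hb₀)
    have c1 := real_inner_comm a b
    have c2 := real_inner_comm a b₀
    have c3 := real_inner_comm a₀ b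
    have c4 := real_inner_comm a₀ b₀
    simp only [inner_sub_left, inner_sub_right]
    linarith
  set V : Submodule ℝ (EuclideanSpace ℝ (Fin d)) := Submodule.span ℝ ((· - b₀) '' (B : Set (EuclideanSpace ℝ (Fin d)))) with hV
  have hmemV : ∀ b ∈ B, b - b₀ ∈ V := fun b hb =>
    Submodule.subset_span ⟨b, hb, rfl⟩
  have hAperp : ∀ a ∈ A, a - a₀ ∈ Vᗮ := by
    intro a ha
    rw [Submodule.mem_orthogonal]
    intro u hu
    induction hu using Submodule.span_induction with
    | mem x hx =>
        obtain ⟨b, hb, rfl⟩ := hx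
        exact key a ha b hb
    | zero => simp
    | add x y _ _ hx hy => rw [inner_add_left, hx, hy]; ring
    | smul r x _ hx => rw [inner_smul_left, hx]; ring
  set p : EuclideanSpace ℝ (Fin d) := (V.orthogonalProjectionOnto (a₀ - b₀) : EuclideanSpace ℝ (Fin d)) with hp
  set c : EuclideanSpace ℝ (Fin d) := b₀ + p with hc
  have hpc : a₀ - c ∈ Vᗮ := by
    have : a₀ - c = (a₀ - b₀) - p := by rw [hc]; abel
    rw [this]
    exact Submodule.sub_starProjection_mem_orthogonal _
  have hcb : ∀ b ∈ B, c - b ∈ V := by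
    intro b hb
    have : c - b = p + (-(b - b₀)) := by rw [hc]; abel
    rw [this]
    exact V.add_mem (Submodule.coe_mem _) (V.neg_mem (hmemV b hb))
  -- Pythagoras for points of B
  have hBsq : ∀ b ∈ B, ‖c - b‖ ^ 2 = 1 - ‖a₀ - c‖ ^ 2 := by
    intro b hb
    have hsplit : a₀ - b = (a₀ - c) + (c - b) := by abel
    have hzero : ⟪a₀ - c, c - b⟫ = 0 := by
      rw [real_inner_comm]
      exact (Submodule.mem_orthogonal V _).mp hpc _ (hcb b hb)
    have h1 : ‖a₀ - b‖ ^ 2 = 1 := by rw [← dist_eq_norm, h a₀ ha₀ b hb]; norm_num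
    have h2 := norm_add_sq_real (a₀ - c) (c - b)
    rw [← hsplit] at h2
    rw [hzero] at h2
    linarith
  -- Pythagoras for points of A
  have hAsq : ∀ a ∈ A, ‖a - c‖ ^ 2 = ‖a₀ - c‖ ^ 2 := by
    intro a ha
    have hac : a - c ∈ Vᗮ := by
      have : a - c = (a - a₀) + (a₀ - c) := by abel
      rw [this]
      exact Vᗮ.add_mem (hAperp a ha) hpc
    have hzero : ⟪a - c, c - b₀⟫ = 0 := by
      rw [real_inner_comm]
      exact (Submodule.mem_orthogonal V _).mp hac _ (hcb b₀ hb₀)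
    have hsplit : a - b₀ = (a - c) + (c - b₀) := by abel
    have h1 : ‖a - b₀‖ ^ 2 = 1 := by rw [← dist_eq_norm, h a ha b₀ hb₀]; norm_num
    have h2 := norm_add_sq_real (a - c) (c - b₀)
    rw [← hsplit, hzero] at h2
    have h3 := hBsq b₀ hb₀
    linarith
  refine ⟨c, ‖a₀ - c‖, ‖c - b₀‖, norm_nonneg _, norm_nonneg _, ?_, ?_, ?_⟩
  · have := hBsq b₀ hb₀; linarith
  · intro a ha
    have hsq : dist a c ^ 2 = ‖a₀ - c‖ ^ 2 := by rw [dist_eq_norm]; exact hAsq a ha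
    have : dist a c = Real.sqrt (‖a₀ - c‖ ^ 2) := by
      rw [← hsq, Real.sqrt_sq dist_nonneg]
    rw [this, Real.sqrt_sq (norm_nonneg _)]
  · intro b hb
    have hsq : dist b c ^ 2 = ‖c - b₀‖ ^ 2 := by
      rw [dist_eq_norm, ← norm_neg]
      have hn : -(b - c) = c - b := by abel
      rw [hn]
      rw [hBsq b hb, hBsq b₀ hb₀]
    have : dist b c = Real.sqrt (‖c - b₀‖ ^ 2) := by
      rw [← hsq, Real.sqrt_sq dist_nonneg]
    rw [this, Real.sqrt_sq (norm_nonneg _)]
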